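/- arXiv:2309.14542 — 2 statements merged into one kernel-verified Lean document; each statement's English description precedes it below -/
import Mathlib

section
/- Let R be an integral domain and R' a ring extension of R such that every element of R' is integral over R and no nonzero element of R is a zero divisor in R'. Then the localization of R' at the multiplicative set R \ {0} is canonically isomorphic to the total ring of fractions Q(R') of R'. -/
/-- A nonzerodivisor which is integral over a base ring divides the image of a nonzero
element of the base ring. -/
lemma aux_dvd_of_integral {R R' : Type*} [CommRing R] [IsDomain R] [CommRing R'] [Algebra R R']
    [Nontrivial R'] {x : R'} (hx : x ∈ nonZeroDivisors R')
    (hint : IsIntegral R x) : ∃ a : R, a ≠ 0 ∧ x ∣ algebraMap R R' a := by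
  obtain ⟨p, hp, hpx⟩ := hint
  have key : ∀ n : ℕ, ∀ p : Polynomial R, p.Monic → Polynomial.aeval x p = 0 →
      p.natDegree = n → ∃ a : R, a ≠ 0 ∧ x ∣ algebraMap R R' a := by
    intro n
    induction n using Nat.strong_induction_on with
    | _ n ih =>
    intro p hp hpx hn
    subst hn
    have hne : p ≠ 0 := hp.ne_zero
    by_cases h0 : p.coeff 0 = 0
    · -- p = X * q, q monic, q(x) = 0 since x is a nonzerodivisor
      obtain ⟨q, hq⟩ := Polynomial.X_dvd_iff.mpr h0
      have hdeg : 0 < p.natDegree := by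
        rcases Nat.eq_zero_or_pos p.natDegree with h | h
        · exfalso
          have := Polynomial.eq_C_of_natDegree_eq_zero h
          rw [this] at h0 hp
          simp [Polynomial.Monic, Polynomial.leadingCoeff] at hp
          simp [hp] at h0
        · exact h
      have hqm : q.Monic := by
        have : p.leadingCoeff = q.leadingCoeff := by
          rw [hq, Polynomial.leadingCoeff_mul, Polynomial.leadingCoeff_X, one_mul]
        rwa [Polynomial.Monic, ← this]
      have hqx : Polynomial.aeval x q = 0 := by
        have : x * Polynomial.aeval x q = 0 := by
          have := hpx
          rw [hq] at this
          simpa using this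
        exact (mem_nonZeroDivisors_iff.mp hx).2 _ (by rw [mul_comm]; exact this)
      have hqd : q.natDegree < p.natDegree := by
        rw [hq, Polynomial.natDegree_mul (Polynomial.X_ne_zero) hqm.ne_zero,
          Polynomial.natDegree_X]
        omega
      exact ih q.natDegree hqd q hqm hqx rfl
    · refine ⟨p.coeff 0, h0, ?_⟩
      -- x * (aeval x (p.divX)) = - algebraMap (p.coeff 0)
      have hdvx : p = Polynomial.divX p * Polynomial.X + Polynomial.C (p.coeff 0) :=
        (Polynomial.divX_mul_X_add p).symm
      have : Polynomial.aeval x (Polynomial.divX p) * x + algebraMap R R' (p.coeff 0) = 0 := by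
        have := hpx
        conv_lhs at this => rw [hdvx]
        simpa using this
      refine ⟨-(Polynomial.aeval x (Polynomial.divX p)), ?_⟩
      rw [mul_neg, mul_comm, eq_comm, neg_eq_iff_add_eq_zero, add_comm]
      linear_combination this
  exact key p.natDegree p hp hpx rfl

/-- Let `R` be an integral domain and `R'` a ring extension of `R` such that
every element of `R'` is integral over `R` and no nonzero element of `R` is a zero divisor
in `R'`. Then the localization of `R'` at the multiplicative set `R \ {0}` is canonically
isomorphic to (i.e. *is*) the total ring of fractions `Q(R')` of `R'`. -/
theorem localization_at_base_nonzero_is_fraction_ring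
    {R R' : Type*} [CommRing R] [IsDomain R] [CommRing R'] [Algebra R R']
    (hinj : Function.Injective (algebraMap R R'))
    (hint : Algebra.IsIntegral R R')
    (hnzd : ∀ r : R, r ≠ 0 → algebraMap R R' r ∈ nonZeroDivisors R') :
    IsFractionRing R'
      (Localization (Submonoid.map (algebraMap R R') (nonZeroDivisors R))) := by
  have hnt : Nontrivial R' := by
    refine ⟨algebraMap R R' 0, algebraMap R R' 1, fun h => ?_⟩
    exact zero_ne_one (hinj h)
  set M := Submonoid.map (algebraMap R R') (nonZeroDivisors R)
  have hle : M ≤ nonZeroDivisors R' := by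
    rintro _ ⟨r, hr, rfl⟩
    exact hnzd r (mem_nonZeroDivisors_iff_ne_zero.mp hr)
  have : IsLocalization M (Localization M) := Localization.isLocalization
  exact IsLocalization.of_le_of_exists_dvd M (nonZeroDivisors R') hle
    (fun n hn => by
      obtain ⟨a, ha, hd⟩ := aux_dvd_of_integral hn (hint.isIntegral n)
      exact ⟨algebraMap R R' a, ⟨a, mem_nonZeroDivisors_iff_ne_zero.mpr ha, rfl⟩, hd⟩)
end

section
/- Let K'/K be a finite Galois field extension with Galois group G, and let R be a commutative K-algebra. Then the subring of G-fixed elements of R ⊗_K K' (where G acts via the second tensor factor) equals R ⊗ 1, i.e. (R ⊗_K K')^G = R. -/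
open TensorProduct

lemma fixed_of_all_aux (K K' : Type*) [Field K] [Field K'] [Algebra K K']
    [FiniteDimensional K K'] [IsGalois K K'] (x : K')
    (hx : ∀ σ : K' ≃ₐ[K] K', σ x = x) : ∃ k : K, algebraMap K K' k = x := by
  have h1 : IntermediateField.fixedField (⊤ : Subgroup (K' ≃ₐ[K] K')) = ⊥ := by
    rw [← IntermediateField.fixingSubgroup_bot (F := K) (E := K')]
    exact IsGalois.fixedField_fixingSubgroup ⊥
  have hmem : x ∈ IntermediateField.fixedField (⊤ : Subgroup (K' ≃ₐ[K] K')) := by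
    intro g
    exact hx g
  rw [h1, IntermediateField.mem_bot] at hmem
  exact hmem

/-- Let `K'/K` be a finite Galois field extension with Galois group `G`, and
`R` a commutative `K`-algebra. Then the `G`-fixed elements of `R ⊗[K] K'` (with `G` acting via
the second tensor factor) are exactly the elements of `R ⊗ 1`, i.e. `(R ⊗_K K')^G = R`. -/
theorem fixed_points_of_galois_action_on_tensor
    (K K' : Type*) [Field K] [Field K'] [Algebra K K']
    [FiniteDimensional K K'] [IsGalois K K']
    (R : Type*) [CommRing R] [Algebra K R]
    (s : R ⊗[K] K') :
    (∀ σ : K' ≃ₐ[K] K',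
        Algebra.TensorProduct.map (AlgHom.id K R) σ.toAlgHom s = s) ↔
      s ∈ (Algebra.TensorProduct.includeLeft : R →ₐ[K] R ⊗[K] K').range := by
  classical
  set b := Module.Basis.ofVectorSpace K R with hb
  set e : R ⊗[K] K' ≃ₗ[K] ((Module.Basis.ofVectorSpaceIndex K R) →₀ K') :=
    (TensorProduct.congr b.repr (LinearEquiv.refl K K')).trans
      (TensorProduct.finsuppScalarLeft K K' _) with he
  have hcompat : ∀ (σ : K' ≃ₐ[K] K') (t : R ⊗[K] K') (i : Module.Basis.ofVectorSpaceIndex K R),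
      e (Algebra.TensorProduct.map (AlgHom.id K R) σ.toAlgHom t) i = σ (e t i) := by
    intro σ t i
    induction t with
    | zero => simp
    | tmul r c =>
        simp [he, TensorProduct.finsuppScalarLeft_apply_tmul_apply, Algebra.smul_def,
          map_mul, AlgEquiv.commutes]
    | add x y hx hy => simp only [map_add, Finsupp.add_apply, hx, hy]
  constructor
  · intro hfix
    -- each coordinate of e s is fixed by all σ, hence in K
    have hcoord : ∀ i, ∃ k : K, algebraMap K K' k = e s i := by
      intro i
      apply fixed_of_all_aux K K'
      intro σ
      rw [← hcompat σ s i, hfix σ]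
    choose k hk using hcoord
    have hsingle : ∀ i : Module.Basis.ofVectorSpaceIndex K R,
        e.symm (Finsupp.single i (e s i)) ∈
          (Algebra.TensorProduct.includeLeft : R →ₐ[K] R ⊗[K] K').range := by
      intro i
      have : e ((k i • b i) ⊗ₜ[K] (1 : K')) = Finsupp.single i (e s i) := by
        ext j
        rw [he]
        simp only [LinearEquiv.trans_apply, TensorProduct.congr_tmul, LinearEquiv.refl_apply,
          TensorProduct.finsuppScalarLeft_apply_tmul_apply, map_smul, Finsupp.smul_apply,
          Module.Basis.repr_self, Finsupp.single_apply]
        by_cases hij : i = j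
        · subst hij
          have h := hk i
          rw [he, LinearEquiv.trans_apply] at h
          simp [Algebra.smul_def, h]
        · simp [hij]
      rw [← this, LinearEquiv.symm_apply_apply]
      exact ⟨k i • b i, rfl⟩
    have : s = e.symm (e s) := (LinearEquiv.symm_apply_apply e s).symm
    rw [this, ← Finsupp.sum_single (e s), map_finsuppSum]
    apply Subalgebra.sum_mem
    intro i hi
    exact hsingle i
  · rintro ⟨r, rfl⟩ σ
    simp
end
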